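/- Let X be an abelian group with an automorphism t : X → X, made into an Alexander quandle by a * b = t a + (1−t) b. Let S be the subgroup of the permutation group of X generated by the right translations x ↦ x * y = t x + (1−t) y for all y ∈ X. Then S acts transitively on X (i.e., the Alexander quandle is connected) if and only if 1−t : X → X is surjective. -/

import Mathlib

/-- **Proposition.** Let `X` be an abelian group with automorphism `t`, made into an
Alexander quandle by `a * b = t a + (1 - t) b`.  Let `S` be the subgroup of the
permutation group of `X` generated by the right translations
`ρ y : x ↦ x * y = t x + (1 - t) y`.  Then `S` acts transitively on `X` (i.e. the
Alexander quandle is connected) if and only if `1 - t : X → X` is surjective. -/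
theorem alexander_quandle_connected_iff_one_sub_t_surjective
    {X : Type*} [AddCommGroup X] (t : X ≃+ X)
    (ρ : X → Equiv.Perm X) (hρ : ∀ y x, ρ y x = t x + (y - t y))
    (S : Subgroup (Equiv.Perm X)) (hS : S = Subgroup.closure (Set.range ρ)) :
    (∀ x y : X, ∃ g ∈ S, g x = y) ↔ Function.Surjective fun x : X => x - t x := by
  subst hS
  constructor
  · intro h y
    -- the subgroup of permutations moving every point by an element of the image of 1 - t
    set K : Subgroup (Equiv.Perm X) :=
      { carrier := {g | ∀ x, ∃ z, g x - x = z - t z}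
        one_mem' := fun x => ⟨0, by simp⟩
        mul_mem' := by
          rintro a b ha hb x
          obtain ⟨z1, h1⟩ := ha (b x)
          obtain ⟨z2, h2⟩ := hb x
          refine ⟨z1 + z2, ?_⟩
          have : (a * b) x - x = (a (b x) - b x) + (b x - x) := by
            simp only [Equiv.Perm.mul_apply]; abel
          rw [this, h1, h2, map_add]
          abel
        inv_mem' := by
          rintro a ha x
          obtain ⟨z, hz⟩ := ha (a⁻¹ x)
          refine ⟨-z, ?_⟩
          rw [← Equiv.Perm.mul_apply, mul_inv_cancel, Equiv.Perm.one_apply] at hz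
          rw [map_neg]
          have : a⁻¹ x - x = -(x - a⁻¹ x) := by abel
          rw [this, hz]
          abel } with hK
    have hle : Subgroup.closure (Set.range ρ) ≤ K := by
      rw [Subgroup.closure_le]
      rintro g ⟨w, rfl⟩ x
      refine ⟨w - x, ?_⟩
      rw [hρ, map_sub]
      abel
    obtain ⟨g, hg, hgx⟩ := h 0 y
    obtain ⟨z, hz⟩ := hle hg 0
    exact ⟨z, by show z - t z = y; rw [← hz, hgx]; abel⟩
  · intro h x y
    obtain ⟨a, ha⟩ := h (y - x)
    simp only at ha
    refine ⟨ρ a * (ρ 0)⁻¹, ?_, ?_⟩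
    · exact mul_mem (Subgroup.subset_closure ⟨a, rfl⟩)
        (inv_mem (Subgroup.subset_closure ⟨0, rfl⟩))
    · have h0 : ρ 0 (t.symm x) = x := by simp [hρ]
      have hinv : (ρ 0)⁻¹ x = t.symm x := by
        rw [Equiv.Perm.inv_def, Equiv.symm_apply_eq]; exact h0.symm
      rw [Equiv.Perm.mul_apply, hinv, hρ, AddEquiv.apply_symm_apply, ha]
      abel
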